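/- arXiv:1412.5655 — 4 statements merged into one kernel-verified Lean document; each statement's English description precedes it below -/
import Mathlib

section
/- For every odd integer m ≥ 1 and every integer k ≥ 1, there exists a monotone function h : [m]^k → {−1,1} such that |{x ∈ [m]^k : h(x) = 1}| = |{x ∈ [m]^k : h(x) = −1}| + 1, together with an injective map Ψ : h⁻¹(−1) → h⁻¹(1) satisfying x ≺ Ψ(x) for every x ∈ h⁻¹(−1). -/
open Finset

/-- `h` is monotone (identifying `false ↦ -1`, `true ↦ 1`; the domain `[m]^k` is
encoded as `Fin k → Fin m`, ordered coordinatewise). -/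
def IsMono {α : Type*} [Preorder α] (f : α → Bool) : Prop :=
  ∀ x y : α, x ≤ y → f x ≤ f y

/-- Strict coordinatewise domination: `x ≼ y` and `x ≠ y`. -/
def StrictBelow {k m : ℕ} (x y : Fin k → Fin m) : Prop :=
  (∀ i, x i ≤ y i) ∧ x ≠ y

private lemma geom_aux (m : ℕ) (hm : 1 ≤ m) :
    ∀ j : ℕ, (∑ i ∈ Finset.range j, (m - 1) * m ^ i) + 1 = m ^ j := by
  intro j
  induction j with
  | zero => simp
  | succ n ih =>
    rw [Finset.sum_range_succ]
    have h1 : 1 ≤ m ^ n := Nat.one_le_pow _ _ hm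
    calc (∑ i ∈ Finset.range n, (m - 1) * m ^ i) + (m - 1) * m ^ n + 1
        = ((∑ i ∈ Finset.range n, (m - 1) * m ^ i) + 1) + (m - 1) * m ^ n := by ring
      _ = m ^ n + (m - 1) * m ^ n := by rw [ih]
      _ = (1 + (m - 1)) * m ^ n := by ring
      _ = m * m ^ n := by rw [show 1 + (m - 1) = m by omega]
      _ = m ^ (n + 1) := by ring

private lemma digit_sum_lt (m t k : ℕ) (hm : m = 2 * t + 1) (d : ℕ → ℕ)
    (hd : ∀ i, d i < m) (j : ℕ) (hj : j < k)
    (htop : ∀ i, j < i → i < k → d i = t) (hjt : d j < t) :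
    ∑ i ∈ Finset.range k, d i * m ^ i < ∑ i ∈ Finset.range k, t * m ^ i := by
  have hm1 : 1 ≤ m := by omega
  have hjk : j + 1 ≤ k := hj
  rw [← Finset.sum_range_add_sum_Ico (fun i => d i * m ^ i) hjk,
      ← Finset.sum_range_add_sum_Ico (fun i => t * m ^ i) hjk]
  have hIco : ∑ i ∈ Finset.Ico (j+1) k, d i * m ^ i
      = ∑ i ∈ Finset.Ico (j+1) k, t * m ^ i := by
    refine Finset.sum_congr rfl fun i hi => ?_
    rw [Finset.mem_Ico] at hi
    rw [htop i (by omega) hi.2]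
  rw [hIco]
  have hmain : ∑ i ∈ Finset.range (j+1), d i * m ^ i
      < ∑ i ∈ Finset.range (j+1), t * m ^ i := by
    rw [Finset.sum_range_succ, Finset.sum_range_succ]
    have hA : (∑ i ∈ Finset.range j, d i * m ^ i) + 1 ≤ m ^ j := by
      rw [← geom_aux m hm1 j]
      have : ∑ i ∈ Finset.range j, d i * m ^ i
          ≤ ∑ i ∈ Finset.range j, (m - 1) * m ^ i :=
        Finset.sum_le_sum fun i _ => Nat.mul_le_mul_right _ (by have := hd i; omega)
      omega
    calc (∑ i ∈ Finset.range j, d i * m ^ i) + d j * m ^ j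
        < m ^ j + d j * m ^ j := by omega
      _ = (d j + 1) * m ^ j := by ring
      _ ≤ t * m ^ j := Nat.mul_le_mul_right _ (by omega)
      _ ≤ (∑ i ∈ Finset.range j, t * m ^ i) + t * m ^ j := Nat.le_add_left _ _
  omega

private lemma digit_sum_gt (m t k : ℕ) (hm : m = 2 * t + 1) (d : ℕ → ℕ)
    (j : ℕ) (hj : j < k)
    (htop : ∀ i, j < i → i < k → d i = t) (hjt : t < d j) :
    ∑ i ∈ Finset.range k, t * m ^ i < ∑ i ∈ Finset.range k, d i * m ^ i := by
  have hm1 : 1 ≤ m := by omega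
  have hjk : j + 1 ≤ k := hj
  rw [← Finset.sum_range_add_sum_Ico (fun i => d i * m ^ i) hjk,
      ← Finset.sum_range_add_sum_Ico (fun i => t * m ^ i) hjk]
  have hIco : ∑ i ∈ Finset.Ico (j+1) k, d i * m ^ i
      = ∑ i ∈ Finset.Ico (j+1) k, t * m ^ i := by
    refine Finset.sum_congr rfl fun i hi => ?_
    rw [Finset.mem_Ico] at hi
    rw [htop i (by omega) hi.2]
  rw [hIco]
  have hmain : ∑ i ∈ Finset.range (j+1), t * m ^ i
      < ∑ i ∈ Finset.range (j+1), d i * m ^ i := by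
    rw [Finset.sum_range_succ, Finset.sum_range_succ]
    have hA : (∑ i ∈ Finset.range j, t * m ^ i) + 1 ≤ m ^ j := by
      rw [← geom_aux m hm1 j]
      have : ∑ i ∈ Finset.range j, t * m ^ i
          ≤ ∑ i ∈ Finset.range j, (m - 1) * m ^ i :=
        Finset.sum_le_sum fun i _ => Nat.mul_le_mul_right _ (by omega)
      omega
    calc (∑ i ∈ Finset.range j, t * m ^ i) + t * m ^ j
        < m ^ j + t * m ^ j := by omega
      _ = (t + 1) * m ^ j := by ring
      _ ≤ d j * m ^ j := Nat.mul_le_mul_right _ (by omega)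
      _ ≤ (∑ i ∈ Finset.range j, d i * m ^ i) + d j * m ^ j := Nat.le_add_left _ _
  omega

theorem odd_grid_balanced_monotone_matching :
    ∀ m k : ℕ, Odd m → 1 ≤ m → 1 ≤ k →
      ∃ h : (Fin k → Fin m) → Bool, IsMono h ∧
        (Finset.univ.filter (fun x => h x = true)).card =
          (Finset.univ.filter (fun x => h x = false)).card + 1 ∧
        ∃ Ψ : (Fin k → Fin m) → (Fin k → Fin m),
          Set.InjOn Ψ {x | h x = false} ∧
          ∀ x, h x = false → h (Ψ x) = true ∧ StrictBelow x (Ψ x) := by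
  intro m k hodd hm hk
  obtain ⟨t, ht⟩ := hodd
  have hmt : m = 2 * t + 1 := by omega
  have hm0 : 0 < m := hm
  -- numeric value of a point (colex / base-m)
  set nv : (Fin k → Fin m) → ℕ := fun x => ∑ i : Fin k, (x i : ℕ) * m ^ (i : ℕ) with hnv
  set N : ℕ := ∑ i ∈ Finset.range k, t * m ^ i with hN
  -- bridge between Fin-indexed and range-indexed sums
  have hbridge : ∀ x : Fin k → Fin m,
      nv x = ∑ i ∈ Finset.range k, (fun i => if h : i < k then (x ⟨i, h⟩ : ℕ) else 0) i * m ^ i := by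
    intro x
    rw [hnv, ← Fin.sum_univ_eq_sum_range (fun i => (if h : i < k then (x ⟨i, h⟩ : ℕ) else 0) * m ^ i) k]
    refine Finset.sum_congr rfl fun i _ => ?_
    simp [i.isLt]
  -- the function h
  refine ⟨fun x => decide (N ≤ nv x), ?_, ?_, ?_⟩
  · -- monotone
    intro x y hxy
    have hle : nv x ≤ nv y :=
      Finset.sum_le_sum fun i _ => Nat.mul_le_mul_right _ (hxy i)
    by_cases hx : N ≤ nv x
    · simp [hx, le_trans hx hle]
    · simp [hx]
  · -- cardinalities
    have hcard1 : (Finset.univ.filter (fun x : Fin k → Fin m => decide (N ≤ nv x) = true)).card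
        = (Finset.univ.filter (fun a : Fin (m ^ k) => N ≤ (a : ℕ))).card := by
      refine Finset.card_equiv finFunctionFinEquiv fun x => ?_
      simp only [Finset.mem_filter, Finset.mem_univ, true_and, decide_eq_true_iff]
      rw [finFunctionFinEquiv_apply]
    have hcard2 : (Finset.univ.filter (fun x : Fin k → Fin m => decide (N ≤ nv x) = false)).card
        = (Finset.univ.filter (fun a : Fin (m ^ k) => ¬ (N ≤ (a : ℕ)))).card := by
      refine Finset.card_equiv finFunctionFinEquiv fun x => ?_
      simp only [Finset.mem_filter, Finset.mem_univ, true_and, decide_eq_false_iff_not]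
      rw [finFunctionFinEquiv_apply]
    have hNlt : 2 * N + 1 = m ^ k := by
      have := geom_aux m hm0 k
      have h2 : ∑ i ∈ Finset.range k, (m - 1) * m ^ i = ∑ i ∈ Finset.range k, 2 * (t * m ^ i) := by
        refine Finset.sum_congr rfl fun i _ => ?_
        rw [show m - 1 = 2 * t by omega]; ring
      rw [h2, ← Finset.mul_sum] at this
      omega
    have hNk : N < m ^ k := by omega
    have hIci : (Finset.univ.filter (fun a : Fin (m ^ k) => N ≤ (a : ℕ))).card = m ^ k - N := by
      have : (Finset.univ.filter (fun a : Fin (m ^ k) => N ≤ (a : ℕ)))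
          = Finset.Ici (⟨N, hNk⟩ : Fin (m ^ k)) := by
        ext a
        simp [Finset.mem_Ici, Fin.le_def]
      rw [this, Fin.card_Ici]
    have hIio : (Finset.univ.filter (fun a : Fin (m ^ k) => ¬ (N ≤ (a : ℕ)))).card = N := by
      have : (Finset.univ.filter (fun a : Fin (m ^ k) => ¬ (N ≤ (a : ℕ))))
          = Finset.Iio (⟨N, hNk⟩ : Fin (m ^ k)) := by
        ext a
        simp [Finset.mem_Iio, Fin.lt_def, Nat.not_le]
      rw [this, Fin.card_Iio]
    rw [hcard1, hcard2, hIci, hIio]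
    omega
  · -- the matching
    classical
    -- set of coordinates differing from t
    set S : (Fin k → Fin m) → Finset (Fin k) :=
      fun x => Finset.univ.filter (fun i => (x i : ℕ) ≠ t) with hS
    -- key fact: nv x = N when S x = ∅
    have hcenter : ∀ x : Fin k → Fin m, ¬ (S x).Nonempty → nv x = N := by
      intro x hx
      rw [hbridge x, hN]
      refine Finset.sum_congr rfl fun i hi => ?_
      rw [Finset.mem_range] at hi
      have : (x ⟨i, hi⟩ : ℕ) = t := by
        by_contra hne
        exact hx ⟨⟨i, hi⟩, by simp [hS, hne]⟩
      simp [hi, this]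
    -- for x with S x nonempty, coordinates above the max are t
    have habove : ∀ (x : Fin k → Fin m) (hx : (S x).Nonempty) (i : Fin k),
        (S x).max' hx < i → (x i : ℕ) = t := by
      intro x hx i hi
      by_contra hne
      have : i ∈ S x := by simp [hS, hne]
      exact absurd ((S x).le_max' i this) (not_le.mpr hi)
    have hmaxne : ∀ (x : Fin k → Fin m) (hx : (S x).Nonempty),
        (x ((S x).max' hx) : ℕ) ≠ t := by
      intro x hx
      have := (S x).max'_mem hx
      simp only [hS, Finset.mem_filter] at this
      exact this.2
    -- characterization of h x = false
    have hfalse : ∀ x : Fin k → Fin m, nv x < N →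
        ∃ hx : (S x).Nonempty, (x ((S x).max' hx) : ℕ) < t := by
      intro x hxN
      have hx : (S x).Nonempty := by
        by_contra hne
        rw [hcenter x hne] at hxN; omega
      refine ⟨hx, ?_⟩
      set j := (S x).max' hx with hj
      by_contra hge
      have hgt : t < (x j : ℕ) := lt_of_le_of_ne (not_lt.mp hge) (Ne.symm (hmaxne x hx))
      have := digit_sum_gt m t k hmt
        (fun i => if h : i < k then (x ⟨i, h⟩ : ℕ) else 0) (j : ℕ) j.isLt
        (fun i hji hik => by
          simp only [dif_pos hik]
          exact habove x hx ⟨i, hik⟩ (Fin.lt_def.mpr hji))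
        (by simp [j.isLt]; exact hgt)
      rw [← hbridge x, ← hN] at this
      omega
    -- if the top nonconstant coordinate exceeds t, then h = true
    have htrue : ∀ (x : Fin k → Fin m) (j : Fin k), (∀ i : Fin k, j < i → (x i : ℕ) = t) →
        t < (x j : ℕ) → N < nv x := by
      intro x j htop hgt
      have := digit_sum_gt m t k hmt
        (fun i => if h : i < k then (x ⟨i, h⟩ : ℕ) else 0) (j : ℕ) j.isLt
        (fun i hji hik => by
          simp only [dif_pos hik]
          exact htop ⟨i, hik⟩ (Fin.lt_def.mpr hji))
        (by simp [j.isLt]; exact hgt)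
      rw [← hbridge x, ← hN] at this
      exact this
    -- define Ψ
    refine ⟨fun x => if hx : (S x).Nonempty then
        (fun i => if i = (S x).max' hx then ⟨((x i : ℕ) + t + 1) % m, Nat.mod_lt _ hm0⟩ else x i)
      else x, ?_, ?_⟩
    · -- injectivity
      intro x hxmem y hymem hxy
      simp only [Set.mem_setOf_eq, decide_eq_false_iff_not, not_le] at hxmem hymem
      obtain ⟨hx, hxlt⟩ := hfalse x hxmem
      obtain ⟨hy, hylt⟩ := hfalse y hymem
      simp only [dif_pos hx, dif_pos hy] at hxy
      set jx := (S x).max' hx with hjx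
      set jy := (S y).max' hy with hjy
      have hnowrapx : ((x jx : ℕ) + t + 1) % m = (x jx : ℕ) + t + 1 :=
        Nat.mod_eq_of_lt (by omega)
      have hnowrapy : ((y jy : ℕ) + t + 1) % m = (y jy : ℕ) + t + 1 :=
        Nat.mod_eq_of_lt (by omega)
      -- jx = jy : both are the largest index where Ψ differs from t
      have hjxy : jx = jy := by
        by_contra hne
        rcases lt_or_gt_of_ne hne with hlt | hlt
        · -- jx < jy : evaluate at jy
          have h0 := congrFun hxy jy
          rw [if_neg (fun h => hne (by rw [h])), if_pos rfl] at h0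
          have h2 := congrArg Fin.val h0
          simp only [hnowrapy] at h2
          have h1 : (x jy : ℕ) = t := habove x hx jy hlt
          omega
        · have h0 := congrFun hxy jx
          rw [if_pos rfl, if_neg (fun h => hne (by rw [h]))] at h0
          have h2 := congrArg Fin.val h0
          simp only [hnowrapx] at h2
          have h1 : (y jx : ℕ) = t := habove y hy jx hlt
          omega
      funext i
      have h0 := congrFun hxy i
      by_cases hi : i = jx
      · subst hi
        rw [if_pos rfl, if_pos hjxy] at h0
        have h2 := congrArg Fin.val h0
        simp only [hnowrapx] at h2
        rw [hjxy] at h2 ⊢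
        rw [hnowrapy] at h2
        exact Fin.ext (by omega)
      · rw [if_neg hi, if_neg (fun h => hi (h.trans hjxy.symm))] at h0
        exact h0
    · -- properties of Ψ
      intro x hxf
      simp only [decide_eq_false_iff_not, not_le] at hxf
      obtain ⟨hx, hxlt⟩ := hfalse x hxf
      set j := (S x).max' hx with hj
      simp only [dif_pos hx]
      have hnowrap : ((x j : ℕ) + t + 1) % m = (x j : ℕ) + t + 1 :=
        Nat.mod_eq_of_lt (by omega)
      set y : Fin k → Fin m :=
        fun i => if i = j then ⟨((x i : ℕ) + t + 1) % m, Nat.mod_lt _ hm0⟩ else x i with hy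
      have hyj : (y j : ℕ) = (x j : ℕ) + t + 1 := by
        have h1 : y j = ⟨((x j : ℕ) + t + 1) % m, Nat.mod_lt _ hm0⟩ := by
          show (if j = j then _ else x j) = _
          rw [if_pos rfl]
        rw [h1]
        exact hnowrap
      have hyeq : ∀ i : Fin k, i ≠ j → y i = x i := by
        intro i hi
        show (if i = j then _ else x i) = x i
        rw [if_neg hi]
      have hyabove : ∀ i : Fin k, j < i → (y i : ℕ) = t := by
        intro i hji
        rw [hyeq i (ne_of_gt hji)]
        exact habove x hx i hji
      constructor
      · simp only [decide_eq_true_iff]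
        exact le_of_lt (htrue y j hyabove (by omega))
      · constructor
        · intro i
          by_cases hi : i = j
          · subst hi
            rw [Fin.le_def, hyj]
            omega
          · rw [hyeq i hi]
        · intro heq
          have h0 := congrArg Fin.val (congrFun heq j)
          rw [hyj] at h0
          omega
end

section
/- There exist a universal constant c > 0 and an N such that the following holds for all n ≥ N and all odd integers m ≥ 3. Set k = ⌈log₂ n⌉, and let h : [m]^k → {−1,1} be any monotone function with |h⁻¹(−1)| = (m^k − 1)/2 for which there exist z₀ ∈ h⁻¹(1) and a bijection Ψ from h⁻¹(−1) onto h⁻¹(1) \ {z₀} with x ≺ Ψ(x) for all x ∈ h⁻¹(−1). For f : {−1,1}^n → {−1,1}, define Φ[f] : [m]^{kn} → {−1,1} by Φ[f](x¹,…,xⁿ) = f(h(x¹),…,h(xⁿ)) where each xⁱ ∈ [m]^k. Then: (1) if f is monotone then Φ[f] is monotone; and (2) for every ε > 0, if f is ε-far from monotone then Φ[f] is c·ε-far from monotone. -/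
open Finset

/-- Normalized Hamming distance between two functions on a finite domain. -/
noncomputable def distB {α : Type*} [Fintype α] (f g : α → Bool) : ℝ :=
  ((Finset.univ.filter (fun x => f x ≠ g x)).card : ℝ) / (Fintype.card α : ℝ)

/-- `f` is `ε`-far from monotone. -/
def FarFromMono {α : Type*} [Fintype α] [Preorder α] (ε : ℝ) (f : α → Bool) : Prop :=
  ∀ g : α → Bool, IsMono g → ε < distB f g

/-- The map `Φ` sending `f : {-1,1}^n → {-1,1}` to `Φ[f] : [m]^{kn} → {-1,1}` defined by
`Φ[f](x¹,…,xⁿ) = f(h(x¹),…,h(xⁿ))`, where each `xⁱ ∈ [m]^k` and the domain `[m]^{kn}`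
is encoded as `Fin n → (Fin k → Fin m)` (ordered coordinatewise). -/
def PhiOdd {n k m : ℕ} (h : (Fin k → Fin m) → Bool) (f : (Fin n → Bool) → Bool) :
    (Fin n → Fin k → Fin m) → Bool :=
  fun x => f (fun i => h (x i))

/-- auxiliary: a maximum violation matching in the hypercube is large when `f` is far
from monotone. -/
lemma cube_matching_aux {n : ℕ} (f : (Fin n → Bool) → Bool) (ε : ℝ)
    (hfar : FarFromMono ε f) :
    ∃ M : Finset ((Fin n → Bool) × (Fin n → Bool)),
      (∀ p ∈ M, p.1 ≤ p.2 ∧ f p.1 = true ∧ f p.2 = false) ∧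
      (∀ p ∈ M, ∀ q ∈ M, p ≠ q → p.1 ≠ q.1 ∧ p.1 ≠ q.2 ∧ p.2 ≠ q.1 ∧ p.2 ≠ q.2) ∧
      ε * 2 ^ n < 2 * M.card := by
  classical
  let good : Finset ((Fin n → Bool) × (Fin n → Bool)) → Prop := fun M =>
    (∀ p ∈ M, p.1 ≤ p.2 ∧ f p.1 = true ∧ f p.2 = false) ∧
    (∀ p ∈ M, ∀ q ∈ M, p ≠ q → p.1 ≠ q.1 ∧ p.1 ≠ q.2 ∧ p.2 ≠ q.1 ∧ p.2 ≠ q.2)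
  let s := (univ : Finset ((Fin n → Bool) × (Fin n → Bool))).powerset.filter good
  have hs : (∅ : Finset ((Fin n → Bool) × (Fin n → Bool))) ∈ s := by
    simp [s, good]
  obtain ⟨M, hMs, hMmax⟩ := Finset.exists_max_image s Finset.card ⟨∅, hs⟩
  have hgood : good M := (Finset.mem_filter.mp hMs).2
  refine ⟨M, hgood.1, hgood.2, ?_⟩
  set C : Finset (Fin n → Bool) := M.image Prod.fst ∪ M.image Prod.snd with hC
  let g : (Fin n → Bool) → Bool := fun x =>
    decide (∃ y : Fin n → Bool, y ∉ C ∧ y ≤ x ∧ f y = true)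
  have hgtrue : ∀ x, g x = true ↔ ∃ y, y ∉ C ∧ y ≤ x ∧ f y = true := by
    intro x; simp [g]
  have hgmono : IsMono g := by
    intro x y hxy
    rw [Bool.le_iff_imp, hgtrue, hgtrue]
    rintro ⟨z, hz1, hz2, hz3⟩
    exact ⟨z, hz1, le_trans hz2 hxy, hz3⟩
  -- every point where f and g disagree lies in C
  have hmis : ∀ x, f x ≠ g x → x ∈ C := by
    intro x hx
    by_contra hxC
    cases hfx : f x with
    | true =>
      have : g x = true := (hgtrue x).mpr ⟨x, hxC, le_refl x, hfx⟩
      exact hx (by rw [hfx, this])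
    | false =>
      cases hgx : g x with
      | false => exact hx (by rw [hfx, hgx])
      | true =>
        obtain ⟨y, hyC, hyx, hfy⟩ := (hgtrue x).mp hgx
        -- (y, x) is a violated pair with both endpoints outside C : contradicts maximality
        have hyxne : (y, x) ∉ M := by
          intro hmem
          exact hyC (Finset.mem_union.mpr (Or.inl (Finset.mem_image.mpr ⟨(y, x), hmem, rfl⟩)))
        have hgood' : good (insert (y, x) M) := by
          constructor
          · intro p hp
            rcases Finset.mem_insert.mp hp with h1 | h1
            · subst h1; exact ⟨hyx, hfy, hfx⟩
            · exact hgood.1 p h1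
          · intro p hp q hq hpq
            have hout : ∀ r ∈ M, y ≠ r.1 ∧ y ≠ r.2 ∧ x ≠ r.1 ∧ x ≠ r.2 := by
              intro r hr
              refine ⟨?_, ?_, ?_, ?_⟩ <;> intro hEq
              · exact hyC (Finset.mem_union.mpr (Or.inl (Finset.mem_image.mpr ⟨r, hr, hEq.symm⟩)))
              · exact hyC (Finset.mem_union.mpr (Or.inr (Finset.mem_image.mpr ⟨r, hr, hEq.symm⟩)))
              · exact hxC (Finset.mem_union.mpr (Or.inl (Finset.mem_image.mpr ⟨r, hr, hEq.symm⟩)))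
              · exact hxC (Finset.mem_union.mpr (Or.inr (Finset.mem_image.mpr ⟨r, hr, hEq.symm⟩)))
            rcases Finset.mem_insert.mp hp with h1 | h1 <;>
              rcases Finset.mem_insert.mp hq with h2 | h2
            · exact absurd (h1.trans h2.symm) hpq
            · subst h1
              obtain ⟨a, b, c, d⟩ := hout q h2
              exact ⟨a, b, c, d⟩
            · subst h2
              obtain ⟨a, b, c, d⟩ := hout p h1
              exact ⟨a.symm, c.symm, b.symm, d.symm⟩
            · exact hgood.2 p h1 q h2 hpq
        have hins : insert (y, x) M ∈ s := by
          refine Finset.mem_filter.mpr ⟨Finset.mem_powerset.mpr (Finset.subset_univ _), hgood'⟩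
        have := hMmax _ hins
        rw [Finset.card_insert_of_notMem hyxne] at this
        omega
  -- distance bound
  have hcube : (Fintype.card (Fin n → Bool) : ℝ) = 2 ^ n := by
    simp [Fintype.card_fun]
  have hsub : (univ.filter (fun x => f x ≠ g x)) ⊆ C := by
    intro x hx
    exact hmis x (Finset.mem_filter.mp hx).2
  have hCcard : C.card ≤ 2 * M.card := by
    calc C.card ≤ (M.image Prod.fst).card + (M.image Prod.snd).card := Finset.card_union_le _ _
    _ ≤ M.card + M.card := Nat.add_le_add (Finset.card_image_le) (Finset.card_image_le)
    _ = 2 * M.card := by ring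
  have hd : ε < distB f g := hfar g hgmono
  have hdle : distB f g ≤ (2 * M.card : ℝ) / 2 ^ n := by
    rw [distB, hcube]
    gcongr
    exact_mod_cast le_trans (Finset.card_le_card hsub) hCcard
  have := lt_of_lt_of_le hd hdle
  rw [lt_div_iff₀ (by positivity : (0:ℝ) < 2 ^ n)] at this
  linarith

lemma two_pow_aux (k : ℕ) (hk : 2 ≤ k) : 2 * 2 ^ k ≤ 3 ^ k := by
  obtain ⟨j, rfl⟩ : ∃ j, k = j + 2 := ⟨k - 2, by omega⟩
  clear hk
  induction j with
  | zero => norm_num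
  | succ j ih =>
    have e1 : 2 * 2 ^ (j + 1 + 2) = 2 * 2 ^ (j + 2) * 2 := by
      rw [show j + 1 + 2 = (j + 2) + 1 from rfl, pow_succ]; ring
    have e2 : 3 ^ (j + 1 + 2) = 3 ^ (j + 2) * 3 := by
      rw [show j + 1 + 2 = (j + 2) + 1 from rfl, pow_succ]
    omega

lemma card_fiber_aux {n k m : ℕ} (h : (Fin k → Fin m) → Bool) (u : Fin n → Bool) :
    (univ.filter (fun x : Fin n → Fin k → Fin m => ∀ i, h (x i) = u i)).card
      = ∏ i, (univ.filter (fun y : Fin k → Fin m => h y = u i)).card := by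
  classical
  rw [← Fintype.card_subtype]
  rw [Fintype.card_congr (Equiv.subtypePiEquivPi
    (p := fun (i : Fin n) (y : Fin k → Fin m) => h y = u i))]
  rw [Fintype.card_pi]
  exact Finset.prod_congr rfl (fun i _ => Fintype.card_subtype _)

/-- The lift of a cube pair `p = (u, v)` to the grid: raise the coordinates where `u` and
`v` disagree using `Ψ`. -/
def liftL {n k m : ℕ} (Ψ : (Fin k → Fin m) → (Fin k → Fin m))
    (p : (Fin n → Bool) × (Fin n → Bool)) (x : Fin n → Fin k → Fin m) :
    Fin n → Fin k → Fin m :=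
  fun i => if p.1 i = p.2 i then x i else Ψ (x i)

/-- Either the lower or the upper endpoint of a lifted pair, chosen to witness a
mismatch with `g`. -/
def liftK {n k m : ℕ} (Φ g : (Fin n → Fin k → Fin m) → Bool)
    (Ψ : (Fin k → Fin m) → (Fin k → Fin m))
    (p : (Fin n → Bool) × (Fin n → Bool)) (x : Fin n → Fin k → Fin m) :
    Fin n → Fin k → Fin m :=
  if Φ x ≠ g x then x else liftL Ψ p x

/-- The heart of the reduction, with `k = ⌈log₂ n⌉` generalized to any `k` with
`2 ≤ k` and `n ≤ 2 ^ k`. -/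
lemma hypergrid_reduction_main {n k m : ℕ} (hm3 : 3 ≤ m) (hmodd : Odd m)
    (hk2 : 2 ≤ k) (hnk : n ≤ 2 ^ k)
    (h : (Fin k → Fin m) → Bool)
    (hcard : (Finset.univ.filter (fun x => h x = false)).card = (m ^ k - 1) / 2)
    (z₀ : Fin k → Fin m) (Ψ : (Fin k → Fin m) → (Fin k → Fin m))
    (hΨbij : Set.BijOn Ψ {x | h x = false} ({x | h x = true} \ {z₀}))
    (hΨlt : ∀ x, h x = false → StrictBelow x (Ψ x))
    (f : (Fin n → Bool) → Bool) (ε : ℝ) (hε : 0 < ε) (hfar : FarFromMono ε f) :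
    FarFromMono (1 / 4 * ε) (PhiOdd h f) := by
  classical
  intro g hg
  obtain ⟨M, hMvio, hMdis, hMcard⟩ := cube_matching_aux f ε hfar
  set Mk := m ^ k with hMkdef
  set t := (Mk - 1) / 2 with htdef
  have hModd : Odd Mk := hmodd.pow
  have hMk2n : 2 * n ≤ Mk := by
    have h2 : 2 * 2 ^ k ≤ 3 ^ k := two_pow_aux k hk2
    have h3 : 3 ^ k ≤ m ^ k := Nat.pow_le_pow_left hm3 k
    omega
  have hMk9 : 9 ≤ Mk := by
    have h1 : (9 : ℕ) = 3 ^ 2 := by norm_num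
    have h2 : 3 ^ 2 ≤ 3 ^ k := Nat.pow_le_pow_right (by norm_num) hk2
    have h3 : 3 ^ k ≤ m ^ k := Nat.pow_le_pow_left hm3 k
    omega
  have ht2 : 2 * t = Mk - 1 := by
    obtain ⟨a, ha⟩ := hModd
    omega
  have ht4 : 4 ≤ t := by omega
  have hcardgrid : Fintype.card (Fin k → Fin m) = Mk := by
    simp [Fintype.card_fun, hMkdef]
  -- both fibers of h have at least t elements
  have hfiber : ∀ b : Bool, t ≤ (univ.filter (fun y : Fin k → Fin m => h y = b)).card := by
    have hsum := Finset.card_filter_add_card_filter_not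
      (s := (univ : Finset (Fin k → Fin m))) (fun y => h y = false)
    simp only [Bool.not_eq_false] at hsum
    rw [Finset.card_univ, hcardgrid, hcard] at hsum
    intro b
    cases b
    · rw [hcard]
    · omega
  -- each fiber of (h ∘ ·) over a cube point has at least t ^ n elements
  have hAcard : ∀ u : Fin n → Bool,
      t ^ n ≤ (univ.filter (fun x : Fin n → Fin k → Fin m => ∀ i, h (x i) = u i)).card := by
    intro u
    rw [card_fiber_aux]
    calc t ^ n = ∏ _i : Fin n, t := by rw [Finset.prod_const, Finset.card_univ]; simp
    _ ≤ ∏ i, (univ.filter (fun y : Fin k → Fin m => h y = u i)).card :=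
      Finset.prod_le_prod' (fun i _ => hfiber (u i))
  -- the lifted pairs
  set Φ : (Fin n → Fin k → Fin m) → Bool := PhiOdd h f with hΦdef
  set W : Finset (Fin n → Fin k → Fin m) :=
    univ.filter (fun z => Φ z ≠ g z) with hWdef
  set A : (Fin n → Bool) → Finset (Fin n → Fin k → Fin m) :=
    fun u => univ.filter (fun x => ∀ i, h (x i) = u i) with hAdef
  set B : ((Fin n → Bool) × (Fin n → Bool)) → Finset (Fin n → Fin k → Fin m) :=
    fun p => (A p.1).image (liftK Φ g Ψ p) with hBdef
  have key : ∀ p ∈ M, ((B p).card = (A p.1).card ∧ B p ⊆ W) ∧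
      (∀ z ∈ B p, (fun i => h (z i)) = p.1 ∨ (fun i => h (z i)) = p.2) := by
    intro p hp
    obtain ⟨hple, hp1, hp2⟩ := hMvio p hp
    have hA : ∀ x ∈ A p.1, ∀ i, h (x i) = p.1 i := by
      intro x hx
      exact (Finset.mem_filter.mp hx).2
    have hbit : ∀ i, p.1 i = p.2 i ∨ (p.1 i = false ∧ p.2 i = true) := by
      intro i
      have hle := hple i
      rcases Bool.eq_false_or_eq_true (p.1 i) with h1 | h1 <;>
        rcases Bool.eq_false_or_eq_true (p.2 i) with h2 | h2
      · exact Or.inl (h1.trans h2.symm)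
      · exact absurd (Bool.le_iff_imp.mp hle h1) (by simp [h2])
      · exact Or.inr ⟨h1, h2⟩
      · exact Or.inl (h1.trans h2.symm)
    have hLfib : ∀ x ∈ A p.1, ∀ i, h (liftL Ψ p x i) = p.2 i := by
      intro x hx i
      rcases hbit i with heq | ⟨hf1, ht2'⟩
      · rw [liftL, if_pos heq, hA x hx i, heq]
      · have hne : p.1 i ≠ p.2 i := by rw [hf1, ht2']; decide
        rw [liftL, if_neg hne]
        have hxmem : x i ∈ {y : Fin k → Fin m | h y = false} := by
          rw [Set.mem_setOf_eq, hA x hx i, hf1]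
        have hm' := hΨbij.mapsTo hxmem
        rw [ht2']
        exact hm'.1
    have hLle : ∀ x ∈ A p.1, x ≤ liftL Ψ p x := by
      intro x hx
      rw [Pi.le_def]
      intro i
      rw [liftL]
      by_cases hc : p.1 i = p.2 i
      · rw [if_pos hc]
      · rw [if_neg hc]
        have hxf : h (x i) = false := by
          rcases hbit i with h' | h'
          · exact absurd h' hc
          · rw [hA x hx i, h'.1]
        rw [Pi.le_def]
        exact fun j => (hΨlt (x i) hxf).1 j
    have hκW : ∀ x ∈ A p.1, liftK Φ g Ψ p x ∈ W := by
      intro x hx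
      by_cases hw : Φ x ≠ g x
      · rw [liftK, if_pos hw]
        exact Finset.mem_filter.mpr ⟨Finset.mem_univ _, hw⟩
      · push_neg at hw
        have hΦx : Φ x = true := by
          show f (fun i => h (x i)) = true
          rw [funext (hA x hx)]
          exact hp1
        have hgx : g x = true := by rw [← hw, hΦx]
        have hgL : g (liftL Ψ p x) = true := by
          have hle := hg x (liftL Ψ p x) (hLle x hx)
          rw [hgx] at hle
          exact (Bool.le_iff_imp.mp hle) rfl
        have hΦL : Φ (liftL Ψ p x) = false := by
          show f (fun i => h (liftL Ψ p x i)) = false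
          rw [funext (hLfib x hx)]
          exact hp2
        rw [liftK, if_neg (not_not_intro hw)]
        refine Finset.mem_filter.mpr ⟨Finset.mem_univ _, ?_⟩
        rw [hΦL, hgL]
        decide
    have hfibκ : ∀ x ∈ A p.1,
        (∀ i, h (liftK Φ g Ψ p x i) = p.1 i) ∨ (∀ i, h (liftK Φ g Ψ p x i) = p.2 i) := by
      intro x hx
      by_cases hw : Φ x ≠ g x
      · rw [liftK, if_pos hw]; exact Or.inl (hA x hx)
      · rw [liftK, if_neg hw]; exact Or.inr (hLfib x hx)
    have hκinj : ∀ x ∈ A p.1, ∀ y ∈ A p.1,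
        liftK Φ g Ψ p x = liftK Φ g Ψ p y → x = y := by
      have hLinj : ∀ x ∈ A p.1, ∀ y ∈ A p.1, liftL Ψ p x = liftL Ψ p y → x = y := by
        intro x hx y hy hxy
        funext i
        have hxyi := congrFun hxy i
        by_cases hc : p.1 i = p.2 i
        · rw [liftL, liftL, if_pos hc, if_pos hc] at hxyi
          exact hxyi
        · rw [liftL, liftL, if_neg hc, if_neg hc] at hxyi
          have hxf : h (x i) = false := by
            rcases hbit i with h' | h'
            · exact absurd h' hc
            · rw [hA x hx i, h'.1]
          have hyf : h (y i) = false := by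
            rcases hbit i with h' | h'
            · exact absurd h' hc
            · rw [hA y hy i, h'.1]
          exact hΨbij.injOn hxf hyf hxyi
      have hmix : ∀ x ∈ A p.1, ∀ y ∈ A p.1, x ≠ liftL Ψ p y := by
        intro x hx y hy hxy
        have hpeq : p.1 = p.2 := funext fun i => by
          rw [← hA x hx i, hxy, hLfib y hy i]
        rw [hpeq, hp2] at hp1
        exact absurd hp1 (by decide)
      intro x hx y hy hxy
      by_cases hwx : Φ x ≠ g x <;> by_cases hwy : Φ y ≠ g y
      · rw [liftK, liftK, if_pos hwx, if_pos hwy] at hxy; exact hxy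
      · rw [liftK, liftK, if_pos hwx, if_neg hwy] at hxy
        exact absurd hxy (hmix x hx y hy)
      · rw [liftK, liftK, if_neg hwx, if_pos hwy] at hxy
        exact absurd hxy.symm (hmix y hy x hx)
      · rw [liftK, liftK, if_neg hwx, if_neg hwy] at hxy
        exact hLinj x hx y hy hxy
    refine ⟨⟨Finset.card_image_of_injOn (fun x hx y hy => hκinj x hx y hy), ?_⟩, ?_⟩
    · intro z hz
      obtain ⟨x, hx, rfl⟩ := Finset.mem_image.mp hz
      exact hκW x hx
    · intro z hz
      obtain ⟨x, hx, rfl⟩ := Finset.mem_image.mp hz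
      rcases hfibκ x hx with h' | h'
      · exact Or.inl (funext h')
      · exact Or.inr (funext h')
  -- the B p are pairwise disjoint
  have hdisjB : ∀ p ∈ M, ∀ q ∈ M, p ≠ q → Disjoint (B p) (B q) := by
    intro p hp q hq hpq
    rw [Finset.disjoint_left]
    intro z hzp hzq
    obtain ⟨d1, d2, d3, d4⟩ := hMdis p hp q hq hpq
    rcases (key p hp).2 z hzp with e1 | e1 <;> rcases (key q hq).2 z hzq with e2 | e2
    · exact d1 (e1.symm.trans e2)
    · exact d2 (e1.symm.trans e2)
    · exact d3 (e1.symm.trans e2)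
    · exact d4 (e1.symm.trans e2)
  have hWge : M.card * t ^ n ≤ W.card := by
    have h1 : M.card • t ^ n ≤ ∑ p ∈ M, (B p).card := by
      refine Finset.card_nsmul_le_sum M _ _ (fun p hp => ?_)
      rw [(key p hp).1.1]
      exact hAcard p.1
    have h2 : ∑ p ∈ M, (B p).card = (M.biUnion B).card := (Finset.card_biUnion hdisjB).symm
    have h3 : M.biUnion B ⊆ W := by
      intro z hz
      obtain ⟨p, hp, hzB⟩ := Finset.mem_biUnion.mp hz
      exact (key p hp).1.2 hzB
    calc M.card * t ^ n = M.card • t ^ n := by rw [smul_eq_mul]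
    _ ≤ ∑ p ∈ M, (B p).card := h1
    _ = (M.biUnion B).card := h2
    _ ≤ W.card := Finset.card_le_card h3
  -- final real computation
  set R : ℝ := (Mk : ℝ) with hRdef
  have hRpos : (0 : ℝ) < R := by
    rw [hRdef]
    have h0 : (0 : ℕ) < Mk := by omega
    exact_mod_cast h0
  have hT : 2 * (t : ℝ) = R - 1 := by
    rw [hRdef]
    have e0 : Mk = 2 * t + 1 := by omega
    rw [e0]
    push_cast
    ring
  have hR9 : (9 : ℝ) ≤ R := by
    rw [hRdef]
    exact_mod_cast hMk9
  have hber : (1 : ℝ) / 2 ≤ ((R - 1) / R) ^ n := by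
    have h1R : 1 / R ≤ 1 := by
      rw [div_le_one hRpos]
      linarith
    have h1 : 1 + (n : ℝ) * (-(1 / R)) ≤ (1 + (-(1 / R))) ^ n :=
      one_add_mul_le_pow (by linarith) n
    have h2 : (1 : ℝ) + -(1 / R) = (R - 1) / R := by field_simp; ring
    rw [h2] at h1
    have h3 : (n : ℝ) * 2 ≤ R := by
      rw [hRdef]
      have e1 : ((2 * n : ℕ) : ℝ) ≤ (Mk : ℝ) := by exact_mod_cast hMk2n
      push_cast at e1
      linarith
    have h4 : (n : ℝ) * (1 / R) ≤ 1 / 2 := by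
      rw [mul_one_div, div_le_div_iff₀ hRpos (by norm_num)]
      linarith
    nlinarith [h1, h4]
  have hgridcard : (Fintype.card (Fin n → Fin k → Fin m) : ℝ) = R ^ n := by
    rw [Fintype.card_fun, hcardgrid, Fintype.card_fin, hRdef]
    push_cast
    ring
  have hd : distB Φ g = (W.card : ℝ) / R ^ n := by
    rw [distB, hgridcard, hWdef]
  have hWreal : (M.card : ℝ) * (t : ℝ) ^ n ≤ (W.card : ℝ) := by exact_mod_cast hWge
  have htRpos : (0 : ℝ) < (t : ℝ) ^ n := by
    have h0 : (0 : ℝ) < (t : ℝ) := by exact_mod_cast (by omega : 0 < t)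
    positivity
  have key2 : ε / 2 * ((R - 1) / R) ^ n < distB Φ g := by
    rw [hd, lt_div_iff₀ (by positivity)]
    have hRn : (R : ℝ) ^ n ≠ 0 := by positivity
    have e3 : ε / 2 * ((R - 1) / R) ^ n * R ^ n = ε * 2 ^ n / 2 * (t : ℝ) ^ n := by
      rw [div_pow, ← hT, mul_pow]
      field_simp
    have step1 : ε * 2 ^ n / 2 * (t : ℝ) ^ n < (M.card : ℝ) * (t : ℝ) ^ n := by
      refine mul_lt_mul_of_pos_right ?_ htRpos
      linarith [hMcard]
    rw [e3]
    exact lt_of_lt_of_le step1 hWreal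
  calc 1 / 4 * ε = ε / 2 * (1 / 2) := by ring
  _ ≤ ε / 2 * ((R - 1) / R) ^ n := mul_le_mul_of_nonneg_left hber (by linarith)
  _ < distB Φ g := key2

theorem hypergrid_reduction_odd :
    ∃ c : ℝ, 0 < c ∧ ∃ N : ℕ, ∀ n : ℕ, N ≤ n → ∀ m : ℕ, Odd m → 3 ≤ m →
      ∀ h : (Fin (Nat.clog 2 n) → Fin m) → Bool, IsMono h →
        (Finset.univ.filter (fun x => h x = false)).card = (m ^ (Nat.clog 2 n) - 1) / 2 →
        (∃ z₀ : Fin (Nat.clog 2 n) → Fin m, h z₀ = true ∧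
          ∃ Ψ : (Fin (Nat.clog 2 n) → Fin m) → (Fin (Nat.clog 2 n) → Fin m),
            Set.BijOn Ψ {x | h x = false} ({x | h x = true} \ {z₀}) ∧
            ∀ x, h x = false → StrictBelow x (Ψ x)) →
        ∀ f : (Fin n → Bool) → Bool,
          (IsMono f → IsMono (PhiOdd h f)) ∧
          (∀ ε : ℝ, 0 < ε → FarFromMono ε f → FarFromMono (c * ε) (PhiOdd h f)) := by
  refine ⟨1 / 4, by norm_num, 3, ?_⟩
  intro n hn m hmodd hm3 h hmono hcard hpair f
  constructor
  · intro hf x y hxy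
    exact hf _ _ (fun i => hmono _ _ (fun j => hxy i j))
  · intro ε hε hfar
    obtain ⟨z₀, hz₀, Ψ, hΨbij, hΨlt⟩ := hpair
    have hk2 : 2 ≤ Nat.clog 2 n := by
      have h1 : Nat.clog 2 3 ≤ Nat.clog 2 n := Nat.clog_mono_right 2 hn
      have h2 : Nat.clog 2 3 = 2 := by decide
      omega
    exact hypergrid_reduction_main hm3 hmodd hk2 (Nat.le_pow_clog (by norm_num) n)
      h hcard z₀ Ψ hΨbij hΨlt f ε hε hfar
end

section
/- For all n ≥ 1, all ε with 1/n ≤ ε ≤ 1/2, and every subset A ⊆ L_mid: if p is a uniformly random path from 0^n to 1^n, then E[|p_mid ∩ A|] ≥ |A|·√n / 2^n. -/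
open Finset

/-- The Hamming weight `‖x‖₁` of `x ∈ {0,1}^n`. -/
def wt {n : ℕ} (x : Fin n → Bool) : ℕ :=
  (Finset.univ.filter (fun i => x i = true)).card

/-- The Hamming distance `‖x − y‖₁`. -/
def hamm {n : ℕ} (x y : Fin n → Bool) : ℕ :=
  (Finset.univ.filter (fun i => x i ≠ y i)).card

/-- The parameter `d = d(n,ε) = 2⌈√(2n·ln(100/ε))⌉`. -/
noncomputable def dPar (n : ℕ) (ε : ℝ) : ℕ :=
  2 * ⌈Real.sqrt (2 * n * Real.log (100 / ε))⌉₊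

open Classical in
/-- The middle layers `L_mid = {x : (n−d)/2 ≤ ‖x‖₁ ≤ (n+d)/2}`. -/
noncomputable def Lmid (n : ℕ) (ε : ℝ) : Finset (Fin n → Bool) :=
  Finset.univ.filter (fun x =>
    ((n : ℝ) - dPar n ε) / 2 ≤ (wt x : ℝ) ∧ (wt x : ℝ) ≤ ((n : ℝ) + dPar n ε) / 2)

/-- The `j`-th point (from the bottom) of the path from `0^n` to `1^n` determined by the
permutation `π`: its ones are exactly in positions `π(0),…,π(j−1)`. -/
def pathPoint {n : ℕ} (π : Equiv.Perm (Fin n)) (j : ℕ) : Fin n → Bool :=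
  fun i => decide ((π.symm i : ℕ) < j)

/-- The indices `j` of the points of the path `π` lying in the middle layers `L_mid`. -/
noncomputable def pmidIdx (n : ℕ) (ε : ℝ) (π : Equiv.Perm (Fin n)) : Finset ℕ :=
  (Finset.range (n + 1)).filter (fun j => pathPoint π j ∈ Lmid n ε)


lemma central_sq (m : ℕ) : (2*m+1) * (Nat.centralBinom m)^2 ≤ 16^m := by
  induction m with
  | zero => simp [Nat.centralBinom]
  | succ m ih =>
    have e := Nat.succ_mul_centralBinom_succ m
    have key : (m+1)^2 * ((2*(m+1)+1) * (Nat.centralBinom (m+1))^2)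
        ≤ (m+1)^2 * 16^(m+1) := by
      have e2 : ((m+1) * Nat.centralBinom (m+1))^2 = (2*(2*m+1)*Nat.centralBinom m)^2 := by
        rw [e]
      have h16 : (16:ℕ)^(m+1) = 16 * 16^m := by ring
      nlinarith [sq_nonneg (Nat.centralBinom m), ih, Nat.zero_le (Nat.centralBinom m)]
    exact Nat.le_of_mul_le_mul_left key (by positivity)

lemma choose_sq (n k : ℕ) : n * (n.choose k)^2 ≤ 4^n := by
  rcases Nat.even_or_odd n with ⟨m, hm⟩ | ⟨m, hm⟩
  · subst hm
    have h1 : (m+m).choose k ≤ (m+m).choose ((m+m)/2) := Nat.choose_le_middle k (m+m)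
    have h2 : (m+m)/2 = m := by omega
    rw [h2] at h1
    have h3 : (m+m).choose m = Nat.centralBinom m := by
      rw [Nat.centralBinom_eq_two_mul_choose]; ring_nf
    rw [h3] at h1
    have h4 := central_sq m
    have h5 : (4:ℕ)^(m+m) = 16^m := by
      rw [show m + m = 2*m by ring, pow_mul]; norm_num
    calc (m+m) * ((m+m).choose k)^2 ≤ (2*m+1) * (Nat.centralBinom m)^2 := by
          nlinarith [Nat.pow_le_pow_left h1 2]
      _ ≤ 16^m := h4
      _ = 4^(m+m) := h5.symm
  · subst hm
    have h1 : (2*m+1).choose k ≤ (2*m+1).choose ((2*m+1)/2) := Nat.choose_le_middle k (2*m+1)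
    have h2 : (2*m+1)/2 = m := by omega
    rw [h2] at h1
    have hsymm : (2*m+1).choose (m+1) = (2*m+1).choose m := by
      have := Nat.choose_symm (n := 2*m+1) (k := m+1) (by omega)
      simpa [show 2*m+1-(m+1) = m by omega] using this.symm
    have hdouble : 2 * (2*m+1).choose m = Nat.centralBinom (m+1) := by
      rw [Nat.centralBinom_eq_two_mul_choose, show 2*(m+1) = (2*m+1) + 1 by ring,
        Nat.choose_succ_succ (2*m+1) m, hsymm]
      ring
    have h4 := central_sq (m+1)
    have key : 4 * ((2*m+1) * ((2*m+1).choose k)^2) ≤ 4 * 4^(2*m+1) := by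
      calc 4 * ((2*m+1) * ((2*m+1).choose k)^2)
          ≤ (2*m+1) * (2 * (2*m+1).choose m)^2 := by
            nlinarith [Nat.pow_le_pow_left h1 2]
        _ ≤ (2*(m+1)+1) * (Nat.centralBinom (m+1))^2 := by
            rw [hdouble]; exact Nat.mul_le_mul_right _ (by omega)
        _ ≤ 16^(m+1) := h4
        _ = 4 * 4^(2*m+1) := by
            rw [show (16:ℕ) = 4^2 by norm_num, ← pow_mul]; ring
    exact Nat.le_of_mul_le_mul_left key (by norm_num)


lemma sqrt_mul_choose_le (n k : ℕ) (H : n * (n.choose k)^2 ≤ 4^n) :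
    Real.sqrt n * (n.choose k) ≤ 2^n := by
  have h1 : (0:ℝ) ≤ Real.sqrt n * (n.choose k) := by positivity
  have h2 : (Real.sqrt n * (n.choose k))^2 ≤ ((2:ℝ)^n)^2 := by
    have : (Real.sqrt n)^2 = (n:ℝ) := Real.sq_sqrt (by positivity)
    have hc : ((n:ℝ) * ((n.choose k):ℝ)^2) ≤ (4:ℝ)^n := by exact_mod_cast H
    calc (Real.sqrt n * (n.choose k))^2 = (Real.sqrt n)^2 * ((n.choose k):ℝ)^2 := by ring
      _ = (n:ℝ) * ((n.choose k):ℝ)^2 := by rw [this]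
      _ ≤ (4:ℝ)^n := hc
      _ = ((2:ℝ)^n)^2 := by rw [← pow_mul, mul_comm, pow_mul]; norm_num
  exact le_of_pow_le_pow_left₀ two_ne_zero (by positivity) h2

lemma card_lt_filter (n j : ℕ) (h : j ≤ n) :
    ((univ : Finset (Fin n)).filter (fun i : Fin n => (i : ℕ) < j)).card = j := by
  have : (univ : Finset (Fin n)).filter (fun i : Fin n => (i : ℕ) < j)
      = (Finset.range j).attachFin (fun m hm => lt_of_lt_of_le (Finset.mem_range.mp hm) h) := by
    ext i
    simp [Finset.mem_attachFin]
  rw [this, Finset.card_attachFin, Finset.card_range]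

lemma wt_pathPoint {n : ℕ} (π : Equiv.Perm (Fin n)) (j : ℕ) (h : j ≤ n) :
    wt (pathPoint π j) = j := by
  unfold wt pathPoint
  simp only [decide_eq_true_eq]
  have heq : ((univ : Finset (Fin n)).filter (fun i => (π.symm i : ℕ) < j)).card
      = ((univ : Finset (Fin n)).filter (fun i : Fin n => (i : ℕ) < j)).card := by
    apply Finset.card_nbij' (i := fun i => π.symm i) (j := fun i => π i)
    · intro a ha; simp at ha ⊢; exact ha
    · intro a ha; simp at ha ⊢; simpa using ha
    · intro a _; simp
    · intro a _; simp
  rw [heq, card_lt_filter n j h]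

lemma exists_perm {n : ℕ} (x x' : Fin n → Bool) (h : wt x = wt x') :
    ∃ τ : Equiv.Perm (Fin n), ∀ i, x (τ i) = x' i := by
  classical
  have hc : Fintype.card {i // x' i = true} = Fintype.card {i // x i = true} := by
    rw [Fintype.card_subtype, Fintype.card_subtype]
    exact h.symm
  have hc' : Fintype.card {i // ¬ (x' i = true)} = Fintype.card {i // ¬ (x i = true)} := by
    rw [Fintype.card_subtype_compl, Fintype.card_subtype_compl, hc]
  let e := Fintype.equivOfCardEq hc
  let e' := Fintype.equivOfCardEq hc'
  refine ⟨(Equiv.sumCompl (fun i => x' i = true)).symm.trans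
    ((Equiv.sumCongr e e').trans (Equiv.sumCompl (fun i => x i = true))), ?_⟩
  intro i
  by_cases hi : x' i = true
  · rw [hi]
    simp only [Equiv.trans_apply, Equiv.sumCongr_apply]
    rw [Equiv.sumCompl_symm_apply_of_pos (p := fun i => x' i = true) hi]
    simp only [Sum.map_inl, Equiv.sumCompl_apply_inl]
    exact (e ⟨i, hi⟩).2
  · simp only [Equiv.trans_apply, Equiv.sumCongr_apply]
    rw [Equiv.sumCompl_symm_apply_of_neg (p := fun i => x' i = true) hi]
    simp only [Sum.map_inr, Equiv.sumCompl_apply_inr]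
    have := (e' ⟨i, hi⟩).2
    simp only [Bool.not_eq_true] at this hi ⊢
    rw [this, hi]

lemma fiber_card_eq {n : ℕ} (x x' : Fin n → Bool) (h : wt x = wt x') (k : ℕ) :
    ((univ : Finset (Equiv.Perm (Fin n))).filter (fun π => pathPoint π k = x)).card
      = ((univ : Finset (Equiv.Perm (Fin n))).filter (fun π => pathPoint π k = x')).card := by
  classical
  obtain ⟨τ, hτ⟩ := exists_perm x x' h
  apply Finset.card_nbij' (i := fun π => π.trans τ.symm) (j := fun π => π.trans τ)
  · intro π hπ
    simp only [Finset.mem_coe, Finset.mem_filter, Finset.mem_univ, true_and] at hπ ⊢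
    funext i
    show decide (((π.trans τ.symm).symm i : ℕ) < k) = x' i
    have : (π.trans τ.symm).symm i = π.symm (τ i) := by simp
    rw [this, ← hτ i, ← hπ]
    rfl
  · intro π hπ
    simp only [Finset.mem_coe, Finset.mem_filter, Finset.mem_univ, true_and] at hπ ⊢
    funext i
    show decide (((π.trans τ).symm i : ℕ) < k) = x i
    have : (π.trans τ).symm i = π.symm (τ.symm i) := by simp
    rw [this]
    show pathPoint π k (τ.symm i) = x i
    rw [hπ]
    have := hτ (τ.symm i)
    rw [Equiv.apply_symm_apply] at this
    exact this.symm
  · intro π _; ext i; simp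
  · intro π _; ext i; simp

lemma card_wt (n k : ℕ) :
    ((univ : Finset (Fin n → Bool)).filter (fun x => wt x = k)).card = n.choose k := by
  classical
  have h1 : ((univ : Finset (Fin n → Bool)).filter (fun x => wt x = k)).card
      = (Finset.powersetCard k (univ : Finset (Fin n))).card := by
    apply Finset.card_nbij' (i := fun x => (univ : Finset (Fin n)).filter (fun i => x i = true))
      (j := fun s => fun i => decide (i ∈ s))
    · intro x hx
      simp only [Finset.mem_coe, Finset.mem_filter, Finset.mem_univ, true_and] at hx
      rw [Finset.mem_coe, Finset.mem_powersetCard_univ]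
      exact hx
    · intro s hs
      rw [Finset.mem_coe, Finset.mem_powersetCard_univ] at hs
      simp only [Finset.mem_coe, Finset.mem_filter, Finset.mem_univ, true_and]
      unfold wt
      rw [← hs]
      congr 1
      ext i
      simp
    · intro x _
      funext i
      simp
    · intro s _
      ext i
      simp
  rw [h1, Finset.card_powersetCard, Finset.card_univ, Fintype.card_fin]

lemma wt_le {n : ℕ} (x : Fin n → Bool) : wt x ≤ n := by
  unfold wt
  calc _ ≤ (univ : Finset (Fin n)).card := Finset.card_filter_le _ _
    _ = n := by simp

lemma fiber_mul {n : ℕ} (x : Fin n → Bool) :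
    ((univ : Finset (Equiv.Perm (Fin n))).filter
        (fun π => pathPoint π (wt x) = x)).card * n.choose (wt x) = n.factorial := by
  classical
  set k := wt x with hk
  have hkn : k ≤ n := wt_le x
  have hsum := Finset.card_eq_sum_card_fiberwise
    (f := fun π : Equiv.Perm (Fin n) => pathPoint π k)
    (s := (univ : Finset (Equiv.Perm (Fin n))))
    (t := (univ : Finset (Fin n → Bool)).filter (fun y => wt y = k))
    (fun π _ => by simp [wt_pathPoint π k hkn])
  have hconst : ∀ y ∈ (univ : Finset (Fin n → Bool)).filter (fun y => wt y = k),
      ((univ : Finset (Equiv.Perm (Fin n))).filter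
        (fun π => pathPoint π k = y)).card
      = ((univ : Finset (Equiv.Perm (Fin n))).filter (fun π => pathPoint π k = x)).card := by
    intro y hy
    simp only [Finset.mem_filter, Finset.mem_univ, true_and] at hy
    exact fiber_card_eq y x (by rw [hy]) k
  rw [Finset.sum_congr rfl hconst, Finset.sum_const, card_wt, smul_eq_mul] at hsum
  rw [Finset.card_univ, Fintype.card_perm, Fintype.card_fin] at hsum
  rw [mul_comm]
  exact hsum.symm

lemma inner_card {n : ℕ} (π : Equiv.Perm (Fin n)) (x : Fin n → Bool) :
    ((Finset.range (n+1)).filter (fun j => pathPoint π j = x)).card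
      = if pathPoint π (wt x) = x then 1 else 0 := by
  classical
  split_ifs with hif
  · rw [Finset.card_eq_one]
    refine ⟨wt x, ?_⟩
    ext j
    simp only [Finset.mem_filter, Finset.mem_range, Nat.lt_succ_iff, Finset.mem_singleton]
    constructor
    · rintro ⟨hj1, hj2⟩
      rw [← wt_pathPoint π j hj1, hj2]
    · rintro rfl
      exact ⟨wt_le x, hif⟩
  · rw [Finset.card_eq_zero]
    ext j
    simp only [Finset.mem_filter, Finset.mem_range, Nat.lt_succ_iff, Finset.notMem_empty,
      iff_false, not_and]
    intro hj1 hj2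
    have hwj : wt x = j := by rw [← hj2, wt_pathPoint π j hj1]
    exact hif (by rw [hwj]; exact hj2)

theorem expected_pmid_cap_A :
    ∀ n : ℕ, 1 ≤ n → ∀ ε : ℝ, 1 / (n : ℝ) ≤ ε → ε ≤ 1 / 2 →
      ∀ A : Finset (Fin n → Bool), A ⊆ Lmid n ε →
        (A.card : ℝ) * Real.sqrt n / 2 ^ n ≤
          (∑ π : Equiv.Perm (Fin n),
              (((pmidIdx n ε π).filter (fun j => pathPoint π j ∈ A)).card : ℝ)) /
            (Fintype.card (Equiv.Perm (Fin n)) : ℝ) := by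
  intro n hn ε hε1 hε2 A hA
  classical
  set F : (Fin n → Bool) → ℕ := fun x =>
    ((univ : Finset (Equiv.Perm (Fin n))).filter (fun π => pathPoint π (wt x) = x)).card with hF
  have hcount : ∀ π : Equiv.Perm (Fin n),
      ((pmidIdx n ε π).filter (fun j => pathPoint π j ∈ A)).card
        = ∑ x ∈ A, (if pathPoint π (wt x) = x then 1 else 0) := by
    intro π
    have h1 : (pmidIdx n ε π).filter (fun j => pathPoint π j ∈ A)
        = (Finset.range (n+1)).filter (fun j => pathPoint π j ∈ A) := by
      unfold pmidIdx
      rw [Finset.filter_filter]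
      apply Finset.filter_congr
      intro j _
      constructor
      · exact fun h => h.2
      · exact fun h => ⟨hA h, h⟩
    rw [h1]
    rw [Finset.card_eq_sum_card_fiberwise
      (f := fun j => pathPoint π j)
      (s := (Finset.range (n+1)).filter (fun j => pathPoint π j ∈ A)) (t := A)
      (fun j hj => (Finset.mem_filter.mp hj).2)]
    apply Finset.sum_congr rfl
    intro x hx
    rw [Finset.filter_filter, ← inner_card π x]
    congr 1
    apply Finset.filter_congr
    intro j _
    constructor
    · exact fun h => h.2
    · exact fun h => ⟨h ▸ hx, h⟩
  have hnum : (∑ π : Equiv.Perm (Fin n),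
      ((pmidIdx n ε π).filter (fun j => pathPoint π j ∈ A)).card) = ∑ x ∈ A, F x := by
    rw [Finset.sum_congr rfl (fun π _ => hcount π), Finset.sum_comm]
    apply Finset.sum_congr rfl
    intro x _
    rw [hF]
    exact (Finset.card_filter _ _).symm
  -- now real estimates
  have hcast : (∑ π : Equiv.Perm (Fin n),
      (((pmidIdx n ε π).filter (fun j => pathPoint π j ∈ A)).card : ℝ))
      = ∑ x ∈ A, (F x : ℝ) := by
    rw [← Nat.cast_sum, hnum, Nat.cast_sum]
  rw [hcast, Fintype.card_perm, Fintype.card_fin]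
  have hper : ∀ x ∈ A, Real.sqrt n / 2^n ≤ (F x : ℝ) / (n.factorial : ℝ) := by
    intro x _
    have hf := fiber_mul x
    have hC := sqrt_mul_choose_le n (wt x) (choose_sq n (wt x))
    have hfR : (F x : ℝ) * (n.choose (wt x) : ℝ) = (n.factorial : ℝ) := by
      exact_mod_cast congrArg (Nat.cast : ℕ → ℝ) hf
    rw [div_le_div_iff₀ (by positivity) (by positivity)]
    calc Real.sqrt n * (n.factorial : ℝ)
        = (F x : ℝ) * (Real.sqrt n * (n.choose (wt x) : ℝ)) := by rw [← hfR]; ring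
      _ ≤ (F x : ℝ) * 2^n := by
          exact mul_le_mul_of_nonneg_left hC (by positivity)
      _ = (F x : ℝ) * 2^n := rfl
  calc (A.card : ℝ) * Real.sqrt n / 2 ^ n
      = ∑ _x ∈ A, Real.sqrt n / 2^n := by
        rw [Finset.sum_const, nsmul_eq_mul]; ring
    _ ≤ ∑ x ∈ A, (F x : ℝ) / (n.factorial : ℝ) := Finset.sum_le_sum hper
    _ = (∑ x ∈ A, (F x : ℝ)) / (n.factorial : ℝ) := by rw [Finset.sum_div]
end

section
/- There exists a universal constant C > 0 such that for all n ≥ 2, all ε with 1/n ≤ ε ≤ 1/2, and all integers a, b with (n−d)/2 ≤ b < a ≤ (n+d)/2 (where d = 2⌈√(2n·ln(100/ε))⌉): (1) C(a, a−b) / C(n−b, a−b) ≤ C/ε⁴, and (2) C(n, ⌊n/2⌋) / C(n, a) ≤ C/ε⁴, where C(·,·) denotes the binomial coefficient. -/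
open Finset

private lemma brb_fact_prod (b k : ℕ) :
    (b + k).factorial = b.factorial * ∏ i ∈ Finset.range k, (b + i + 1) := by
  induction k with
  | zero => simp
  | succ k ih =>
    rw [Finset.prod_range_succ, show b + (k+1) = (b+k) + 1 from rfl, Nat.factorial_succ, ih]
    ring

private lemma brb_core (c t k : ℕ) :
    ∏ i ∈ Finset.range k, ((c + t + i + 1 : ℕ) : ℝ) ≤
      Real.exp ((t : ℝ) * k / ((c : ℝ) + 1)) * ∏ i ∈ Finset.range k, ((c + i + 1 : ℕ) : ℝ) := by
  have hc : (0:ℝ) < (c:ℝ) + 1 := by positivity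
  calc ∏ i ∈ Finset.range k, ((c + t + i + 1 : ℕ) : ℝ)
      ≤ ∏ i ∈ Finset.range k, (Real.exp ((t:ℝ)/((c:ℝ)+1)) * ((c + i + 1 : ℕ) : ℝ)) := by
        apply Finset.prod_le_prod
        · intro i _; positivity
        · intro i _
          have h1 : ((t:ℝ)/((c:ℝ)+1) + 1) ≤ Real.exp ((t:ℝ)/((c:ℝ)+1)) := Real.add_one_le_exp _
          have h2 : ((c + t + i + 1 : ℕ) : ℝ) ≤ ((t:ℝ)/((c:ℝ)+1) + 1) * ((c + i + 1 : ℕ) : ℝ) := by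
            push_cast
            rw [div_add' _ _ _ (ne_of_gt hc), div_mul_eq_mul_div, le_div_iff₀ hc]
            have : (0:ℝ) ≤ (t:ℝ) * i := by positivity
            nlinarith
          calc ((c + t + i + 1 : ℕ) : ℝ) ≤ ((t:ℝ)/((c:ℝ)+1) + 1) * ((c + i + 1 : ℕ) : ℝ) := h2
            _ ≤ Real.exp ((t:ℝ)/((c:ℝ)+1)) * ((c + i + 1 : ℕ) : ℝ) := by
              apply mul_le_mul_of_nonneg_right h1; positivity
    _ = Real.exp ((t : ℝ) * k / ((c : ℝ) + 1)) * ∏ i ∈ Finset.range k, ((c + i + 1 : ℕ) : ℝ) := by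
        rw [Finset.prod_mul_distrib, Finset.prod_const, ← Real.exp_nat_mul,
          Finset.card_range]
        ring_nf

private lemma brb_master (n b a : ℕ) (hba : b ≤ a) (han : a ≤ n) (T : ℝ) (hT : 0 ≤ T)
    (h : ((a:ℝ) + (b:ℝ) - n) * ((a:ℝ) - b) ≤ T * ((n:ℝ) - a + 1)) :
    (a.factorial : ℝ) * ((n - a).factorial : ℝ) ≤
      Real.exp T * ((b.factorial : ℝ) * ((n - b).factorial : ℝ)) := by
  set k := a - b with hk
  have hae : a = b + k := by omega
  have hnb : n - b = (n - a) + k := by omega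
  have hfa : (a.factorial : ℝ) = (b.factorial : ℝ) * ∏ i ∈ Finset.range k, ((b + i + 1 : ℕ) : ℝ) := by
    rw [hae, brb_fact_prod]; push_cast; ring
  have hfnb : ((n - b).factorial : ℝ) =
      ((n - a).factorial : ℝ) * ∏ i ∈ Finset.range k, ((n - a + i + 1 : ℕ) : ℝ) := by
    rw [hnb, brb_fact_prod]; push_cast; ring
  rcases le_or_gt (a + b) n with hab | hab
  · have hprod : ∏ i ∈ Finset.range k, ((b + i + 1 : ℕ) : ℝ) ≤
        ∏ i ∈ Finset.range k, ((n - a + i + 1 : ℕ) : ℝ) := by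
      apply Finset.prod_le_prod
      · intro i _; positivity
      · intro i _
        have : b + i + 1 ≤ n - a + i + 1 := by omega
        exact_mod_cast this
    have h1 : (1:ℝ) ≤ Real.exp T := Real.one_le_exp hT
    have hfnba : (0:ℝ) ≤ ((n-a).factorial : ℝ) := by positivity
    have hb0 : (0:ℝ) ≤ (b.factorial : ℝ) := by positivity
    calc (a.factorial : ℝ) * ((n - a).factorial : ℝ)
        = (b.factorial : ℝ) * (∏ i ∈ Finset.range k, ((b + i + 1 : ℕ) : ℝ)) * ((n-a).factorial : ℝ) := by
          rw [hfa]
      _ ≤ (b.factorial : ℝ) * (∏ i ∈ Finset.range k, ((n - a + i + 1 : ℕ) : ℝ)) * ((n-a).factorial : ℝ) := by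
          apply mul_le_mul_of_nonneg_right _ hfnba
          exact mul_le_mul_of_nonneg_left hprod hb0
      _ = (b.factorial : ℝ) * ((n - b).factorial : ℝ) := by rw [hfnb]; ring
      _ ≤ Real.exp T * ((b.factorial : ℝ) * ((n - b).factorial : ℝ)) := by
          have hX0 : (0:ℝ) ≤ (b.factorial:ℝ) * ((n-b).factorial:ℝ) := by positivity
          nlinarith
  · set t := a + b - n with ht
    have hbe : ∀ i, b + i + 1 = (n - a) + t + i + 1 := by intro i; omega
    have hprod : ∏ i ∈ Finset.range k, ((b + i + 1 : ℕ) : ℝ) ≤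
        Real.exp ((t : ℝ) * k / (((n-a : ℕ) : ℝ) + 1)) * ∏ i ∈ Finset.range k, ((n - a + i + 1 : ℕ) : ℝ) := by
      have := brb_core (n - a) t k
      convert this using 3 with i hi
      rw [hbe]
    have hexp : Real.exp ((t : ℝ) * k / (((n-a : ℕ) : ℝ) + 1)) ≤ Real.exp T := by
      apply Real.exp_le_exp.mpr
      have hpos : (0:ℝ) < ((n-a : ℕ) : ℝ) + 1 := by positivity
      rw [div_le_iff₀ hpos]
      have e1 : ((t:ℝ) * k) = ((a:ℝ) + (b:ℝ) - n) * ((a:ℝ) - b) := by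
        have : (t : ℝ) = (a:ℝ) + b - n := by
          have h' : (t : ℤ) = (a:ℤ) + b - n := by omega
          exact_mod_cast h'
        have hk' : (k : ℝ) = (a:ℝ) - b := by
          have h' : (k : ℤ) = (a:ℤ) - b := by omega
          exact_mod_cast h'
        rw [this, hk']
      have e2 : ((n:ℝ) - a + 1) = ((n-a : ℕ) : ℝ) + 1 := by
        have h' : ((n - a : ℕ) : ℤ) = (n:ℤ) - a := by omega
        have h'' : ((n - a : ℕ) : ℝ) = (n:ℝ) - a := by exact_mod_cast h'
        rw [h'']
      rw [e1, ← e2]; exact h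
    calc (a.factorial : ℝ) * ((n - a).factorial : ℝ)
        = (b.factorial : ℝ) * (∏ i ∈ Finset.range k, ((b + i + 1 : ℕ) : ℝ)) * ((n-a).factorial : ℝ) := by
          rw [hfa]
      _ ≤ (b.factorial : ℝ) * (Real.exp ((t : ℝ) * k / (((n-a : ℕ) : ℝ) + 1)) *
            ∏ i ∈ Finset.range k, ((n - a + i + 1 : ℕ) : ℝ)) * ((n-a).factorial : ℝ) := by
          apply mul_le_mul_of_nonneg_right _ (by positivity)
          exact mul_le_mul_of_nonneg_left hprod (by positivity)
      _ = Real.exp ((t : ℝ) * k / (((n-a : ℕ) : ℝ) + 1)) * ((b.factorial : ℝ) * ((n - b).factorial : ℝ)) := by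
          rw [hfnb]; ring
      _ ≤ Real.exp T * ((b.factorial : ℝ) * ((n - b).factorial : ℝ)) := by
          apply mul_le_mul_of_nonneg_right hexp (by positivity)

private lemma brb_ratio1 (n b a : ℕ) (hba : b ≤ a) (han : a ≤ n) (T : ℝ) (hT : 0 ≤ T)
    (h : ((a:ℝ) + (b:ℝ) - n) * ((a:ℝ) - b) ≤ T * ((n:ℝ) - a + 1)) :
    (a.choose (a - b) : ℝ) / ((n - b).choose (a - b) : ℝ) ≤ Real.exp T := by
  have M := brb_master n b a hba han T hT h
  set k := a - b with hk
  have h1 : a.choose k * k.factorial * b.factorial = a.factorial := by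
    have := Nat.choose_mul_factorial_mul_factorial (show k ≤ a by omega)
    rwa [show a - k = b by omega] at this
  have h2 : (n - b).choose k * k.factorial * (n - a).factorial = (n - b).factorial := by
    have := Nat.choose_mul_factorial_mul_factorial (show k ≤ n - b by omega)
    rwa [show n - b - k = n - a by omega] at this
  have hBpos : 0 < ((n - b).choose k : ℝ) := by
    exact_mod_cast Nat.choose_pos (show k ≤ n - b by omega)
  rw [div_le_iff₀ hBpos]
  have hs : (0:ℝ) < (k.factorial : ℝ) * (b.factorial : ℝ) * ((n - a).factorial : ℝ) := by
    positivity
  apply le_of_mul_le_mul_right _ hs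
  have e1 : ((a.choose k : ℝ)) * ((k.factorial : ℝ) * (b.factorial : ℝ)) = (a.factorial : ℝ) := by
    exact_mod_cast congrArg (Nat.cast (R := ℝ)) (by rw [← h1]; ring)
  have e2 : (((n-b).choose k : ℝ)) * ((k.factorial : ℝ) * ((n-a).factorial : ℝ)) = ((n-b).factorial : ℝ) := by
    exact_mod_cast congrArg (Nat.cast (R := ℝ)) (by rw [← h2]; ring)
  calc (a.choose k : ℝ) * ((k.factorial : ℝ) * (b.factorial : ℝ) * ((n - a).factorial : ℝ))
      = (a.factorial : ℝ) * ((n-a).factorial : ℝ) := by rw [← e1]; ring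
    _ ≤ Real.exp T * ((b.factorial : ℝ) * ((n - b).factorial : ℝ)) := M
    _ = Real.exp T * ((n-b).choose k : ℝ) * ((k.factorial : ℝ) * (b.factorial : ℝ) * ((n - a).factorial : ℝ)) := by
        rw [← e2]; ring

private lemma brb_ratio2 (n a : ℕ) (han : a ≤ n) (T : ℝ)
    (hM : (a.factorial : ℝ) * ((n - a).factorial : ℝ) ≤
      Real.exp T * (((n/2).factorial : ℝ) * ((n - n/2).factorial : ℝ))) :
    (n.choose (n / 2) : ℝ) / (n.choose a : ℝ) ≤ Real.exp T := by
  have h1 : n.choose (n/2) * (n/2).factorial * (n - n/2).factorial = n.factorial :=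
    Nat.choose_mul_factorial_mul_factorial (Nat.div_le_self n 2)
  have h2 : n.choose a * a.factorial * (n - a).factorial = n.factorial :=
    Nat.choose_mul_factorial_mul_factorial han
  have hBpos : 0 < (n.choose a : ℝ) := by exact_mod_cast Nat.choose_pos han
  rw [div_le_iff₀ hBpos]
  have hs : (0:ℝ) < ((n/2).factorial : ℝ) * ((n - n/2).factorial : ℝ) *
      ((a.factorial : ℝ) * ((n - a).factorial : ℝ)) := by positivity
  apply le_of_mul_le_mul_right _ hs
  have e1 : (n.choose (n/2) : ℝ) * (((n/2).factorial : ℝ) * ((n - n/2).factorial : ℝ)) = (n.factorial : ℝ) := by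
    exact_mod_cast congrArg (Nat.cast (R := ℝ)) (by rw [← h1]; ring)
  have e2 : (n.choose a : ℝ) * ((a.factorial : ℝ) * ((n - a).factorial : ℝ)) = (n.factorial : ℝ) := by
    exact_mod_cast congrArg (Nat.cast (R := ℝ)) (by rw [← h2]; ring)
  have hnf : (0:ℝ) < (n.factorial : ℝ) := by exact_mod_cast n.factorial_pos
  calc (n.choose (n/2) : ℝ) * (((n/2).factorial : ℝ) * ((n - n/2).factorial : ℝ) *
        ((a.factorial : ℝ) * ((n - a).factorial : ℝ)))
      = (n.factorial : ℝ) * ((a.factorial : ℝ) * ((n - a).factorial : ℝ)) := by rw [← e1]; ring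
    _ ≤ (n.factorial : ℝ) * (Real.exp T * (((n/2).factorial : ℝ) * ((n - n/2).factorial : ℝ))) := by
        exact mul_le_mul_of_nonneg_left hM (le_of_lt hnf)
    _ = Real.exp T * (n.choose a : ℝ) * (((n/2).factorial : ℝ) * ((n - n/2).factorial : ℝ) *
        ((a.factorial : ℝ) * ((n - a).factorial : ℝ))) := by rw [← e2]; ring

private lemma brb_choose_le_two_pow (n k : ℕ) : n.choose k ≤ 2 ^ n := by
  rcases le_or_gt k n with h | h
  · calc n.choose k ≤ ∑ m ∈ Finset.range (n+1), n.choose m :=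
        Finset.single_le_sum (fun i _ => Nat.zero_le _) (Finset.mem_range.mpr (by omega))
      _ = 2 ^ n := Nat.sum_range_choose n
  · rw [Nat.choose_eq_zero_of_lt h]; exact Nat.zero_le _

set_option maxHeartbeats 1000000 in
private lemma brb_numeric (n : ℕ) (hn : 10000 ≤ n) (ε : ℝ) (hε1 : 1 / (n : ℝ) ≤ ε) (hε2 : ε ≤ 1 / 2) :
    (dPar n ε : ℝ) ≤ (n : ℝ) / 2 ∧
    (dPar n ε : ℝ) * ((dPar n ε : ℝ) + 1) ≤
      (8 * Real.log (100 / ε) + 2000) * ((n : ℝ) - (dPar n ε : ℝ) + 2) := by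
  have hn0 : (0:ℝ) < (n:ℝ) := by positivity
  have hn' : (10000:ℝ) ≤ (n:ℝ) := by exact_mod_cast hn
  have hε0 : 0 < ε := lt_of_lt_of_le (by positivity) hε1
  set L := Real.log (100 / ε) with hLdef
  have hL0 : 0 ≤ L := Real.log_nonneg (by rw [le_div_iff₀ hε0]; linarith)
  have hLM : L ≤ Real.log (100 * (n:ℝ)) := by
    apply Real.log_le_log (by positivity)
    rw [div_le_iff₀ hε0]
    have h1 : 1 ≤ (n:ℝ) * ε := by
      have := (div_le_iff₀ hn0).mp hε1
      linarith
    nlinarith [h1]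
  set u := (n:ℝ) ^ ((1:ℝ)/24) with hudef
  have hu0 : 0 ≤ u := Real.rpow_nonneg (le_of_lt hn0) _
  have hu24 : u ^ (24:ℕ) = (n:ℝ) := by
    rw [hudef, ← Real.rpow_natCast ((n:ℝ) ^ ((1:ℝ)/24)) 24, ← Real.rpow_mul (le_of_lt hn0)]
    norm_num
  have hu2 : u ^ (2:ℕ) = (n:ℝ) ^ ((1:ℝ)/12) := by
    rw [hudef, ← Real.rpow_natCast ((n:ℝ) ^ ((1:ℝ)/24)) 2, ← Real.rpow_mul (le_of_lt hn0)]
    norm_num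
  have hu146 : (1.46:ℝ) ≤ u := by
    by_contra hc
    push_neg at hc
    have h1 : u ^ (24:ℕ) < (1.46:ℝ) ^ (24:ℕ) := by
      exact pow_lt_pow_left₀ hc hu0 (by norm_num)
    rw [hu24] at h1
    have : ((1.46:ℝ)) ^ (24:ℕ) < 10000 := by norm_num
    linarith
  have hM18 : Real.log (100 * (n:ℝ)) ≤ 18 * u ^ (2:ℕ) := by
    set y := ((100:ℝ) * n) ^ ((1:ℝ)/12) with hydef
    have hy0 : 0 < y := Real.rpow_pos_of_pos (by positivity) _
    have hylog : Real.log (100 * (n:ℝ)) = 12 * Real.log y := by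
      rw [hydef, Real.log_rpow (by positivity)]; ring
    have hyle : Real.log y ≤ y := by
      have := Real.log_le_sub_one_of_pos hy0; linarith
    have hysplit : y = (100:ℝ) ^ ((1:ℝ)/12) * (n:ℝ) ^ ((1:ℝ)/12) :=
      Real.mul_rpow (by norm_num) (le_of_lt hn0)
    have h100 : (100:ℝ) ^ ((1:ℝ)/12) ≤ 1.5 := by
      by_contra hc
      push_neg at hc
      have h0 : (0:ℝ) ≤ (1.5:ℝ) := by norm_num
      have h1 : (1.5:ℝ) ^ (12:ℕ) < ((100:ℝ) ^ ((1:ℝ)/12)) ^ (12:ℕ) :=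
        pow_lt_pow_left₀ hc h0 (by norm_num)
      have h2 : ((100:ℝ) ^ ((1:ℝ)/12)) ^ (12:ℕ) = 100 := by
        rw [← Real.rpow_natCast ((100:ℝ) ^ ((1:ℝ)/12)) 12, ← Real.rpow_mul (by norm_num)]
        norm_num
      rw [h2] at h1
      norm_num at h1
    have hn112 : (0:ℝ) ≤ (n:ℝ) ^ ((1:ℝ)/12) := Real.rpow_nonneg (le_of_lt hn0) _
    calc Real.log (100 * (n:ℝ)) = 12 * Real.log y := hylog
      _ ≤ 12 * y := by linarith
      _ = 12 * ((100:ℝ) ^ ((1:ℝ)/12) * (n:ℝ) ^ ((1:ℝ)/12)) := by rw [hysplit]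
      _ ≤ 12 * (1.5 * (n:ℝ) ^ ((1:ℝ)/12)) := by
          apply mul_le_mul_of_nonneg_left _ (by norm_num)
          exact mul_le_mul_of_nonneg_right h100 hn112
      _ = 18 * u ^ (2:ℕ) := by rw [hu2]; ring
  have hL18 : L ≤ 18 * u ^ (2:ℕ) := le_trans hLM hM18
  set S := Real.sqrt (2 * (n:ℝ) * L) with hSdef
  have hS0 : 0 ≤ S := Real.sqrt_nonneg _
  have hS2 : S ^ (2:ℕ) = 2 * (n:ℝ) * L := Real.sq_sqrt (by positivity)
  have hS613 : S ≤ 6 * u ^ (13:ℕ) := by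
    have h1 : 2 * (n:ℝ) * L ≤ (6 * u ^ (13:ℕ)) ^ (2:ℕ) := by
      have : (6 * u ^ (13:ℕ)) ^ (2:ℕ) = 36 * (u^(24:ℕ) * u^(2:ℕ)) := by ring
      rw [this, hu24]
      have hq := mul_le_mul_of_nonneg_left hL18 (show (0:ℝ) ≤ 2*(n:ℝ) by positivity)
      linarith [hq]
    calc S ≤ Real.sqrt ((6 * u ^ (13:ℕ)) ^ (2:ℕ)) := Real.sqrt_le_sqrt h1
      _ = 6 * u ^ (13:ℕ) := Real.sqrt_sq (by positivity)
  set δ := ((dPar n ε : ℕ) : ℝ) with hδdef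
  have hδ0 : 0 ≤ δ := Nat.cast_nonneg _
  have hδ2S : δ ≤ 2 * S + 2 := by
    have hceil : ((⌈S⌉₊ : ℕ) : ℝ) < S + 1 := Nat.ceil_lt_add_one hS0
    have : δ = 2 * ((⌈S⌉₊ : ℕ) : ℝ) := by
      rw [hδdef, dPar]; push_cast; ring
    rw [this]; linarith
  have hδu : δ ≤ 12 * u ^ (13:ℕ) + 2 := by linarith
  clear_value u S δ
  have p13 : (0:ℝ) ≤ u ^ (13:ℕ) := by positivity
  have p15 : (0:ℝ) ≤ u ^ (15:ℕ) := by positivity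
  have p2 : (0:ℝ) ≤ u ^ (2:ℕ) := by positivity
  have h9 : (30:ℝ) ≤ u ^ (9:ℕ) := by
    calc (30:ℝ) ≤ (1.46:ℝ)^(9:ℕ) := by norm_num
      _ ≤ u ^ (9:ℕ) := pow_le_pow_left₀ (by norm_num) hu146 9
  have h11 : (64:ℝ) ≤ u ^ (11:ℕ) := by
    calc (64:ℝ) ≤ (1.46:ℝ)^(11:ℕ) := by norm_num
      _ ≤ u ^ (11:ℕ) := pow_le_pow_left₀ (by norm_num) hu146 11
  have h22 : (1000:ℝ) ≤ u ^ (22:ℕ) := by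
    calc (1000:ℝ) ≤ (1.46:ℝ)^(22:ℕ) := by norm_num
      _ ≤ u ^ (22:ℕ) := pow_le_pow_left₀ (by norm_num) hu146 22
  have h24 : (8000:ℝ) ≤ u ^ (24:ℕ) := by
    calc (8000:ℝ) ≤ (1.46:ℝ)^(24:ℕ) := by norm_num
      _ ≤ u ^ (24:ℕ) := pow_le_pow_left₀ (by norm_num) hu146 24
  have m2 : 64 * u ^ (13:ℕ) ≤ u ^ (11:ℕ) * u ^ (13:ℕ) := mul_le_mul_of_nonneg_right h11 p13
  constructor
  · linarith [m2, h24, hu24, hδu]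
  · have step1 : δ * (δ + 1) ≤ 8 * (n:ℝ) * L + 10 * S + 6 := by
      have prod := mul_le_mul hδ2S (show δ + 1 ≤ 2*S+3 by linarith)
        (show (0:ℝ) ≤ δ + 1 by linarith) (show (0:ℝ) ≤ 2*S+2 by linarith)
      linarith [prod, hS2]
    have step2 : 8 * L * δ ≤ 1728 * u ^ (15:ℕ) + 288 * u ^ (2:ℕ) := by
      have q1 := mul_nonneg (sub_nonneg.mpr hL18) hδ0
      have q2 := mul_nonneg (sub_nonneg.mpr hδu) p2
      nlinarith [q1, q2]
    have m1 : 30 * u ^ (15:ℕ) ≤ u ^ (9:ℕ) * u ^ (15:ℕ) := mul_le_mul_of_nonneg_right h9 p15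
    have m3 : 1000 * u ^ (2:ℕ) ≤ u ^ (22:ℕ) * u ^ (2:ℕ) := mul_le_mul_of_nonneg_right h22 p2
    have key : 1728 * u ^ (15:ℕ) + 24060 * u ^ (13:ℕ) + 288 * u ^ (2:ℕ) + 6 ≤ 2000 * u ^ (24:ℕ) := by
      linarith [m1, m2, m3, h24]
    have hnu : (n:ℝ) = u ^ (24:ℕ) := hu24.symm
    have expand : (8 * L + 2000) * ((n:ℝ) - δ + 2) =
        8 * L * (n:ℝ) - 8 * L * δ + 16 * L + 2000 * (n:ℝ) - 2000 * δ + 4000 := by ring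
    rw [expand]
    linarith [step1, step2, key, hS613, hδu, hL0, hδ0, hnu]

set_option maxHeartbeats 1000000 in
theorem binomial_ratio_bounds :
    ∃ C : ℝ, 0 < C ∧ ∀ n : ℕ, 2 ≤ n → ∀ ε : ℝ, 1 / (n : ℝ) ≤ ε → ε ≤ 1 / 2 →
      ∀ a b : ℕ,
        ((n : ℝ) - dPar n ε) / 2 ≤ (b : ℝ) → b < a → (a : ℝ) ≤ ((n : ℝ) + dPar n ε) / 2 →
        ((a.choose (a - b) : ℝ) / ((n - b).choose (a - b) : ℝ) ≤ C / ε ^ 4) ∧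
        ((n.choose (n / 2) : ℝ) / (n.choose a : ℝ) ≤ C / ε ^ 4) := by
  refine ⟨10^8 * Real.exp 20000, by positivity, ?_⟩
  intro n hn ε hε1 hε2 a b hb hba ha
  set C : ℝ := 10^8 * Real.exp 20000 with hCdef
  have hn0 : (0:ℝ) < (n:ℝ) := by
    have : (2:ℝ) ≤ (n:ℝ) := by exact_mod_cast hn
    linarith
  have hε0 : 0 < ε := lt_of_lt_of_le (by positivity) hε1
  have hε4 : (0:ℝ) < ε ^ 4 := pow_pos hε0 4
  have hε41 : ε ^ 4 ≤ 1 := by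
    have : ε ≤ 1 := by linarith
    exact pow_le_one₀ (le_of_lt hε0) this
  have hC0 : (0:ℝ) < C := by rw [hCdef]; positivity
  have hCle : C ≤ C / ε ^ 4 := by
    rw [le_div_iff₀ hε4]
    nlinarith [hC0, hε41, hε4]
  set δ := ((dPar n ε : ℕ) : ℝ) with hδdef
  have hδ0 : 0 ≤ δ := Nat.cast_nonneg _
  rcases lt_or_ge n a with hna | han
  · -- a > n : both denominators vanish
    constructor
    · have hz : (n - b).choose (a - b) = 0 := Nat.choose_eq_zero_of_lt (by omega)
      rw [hz]
      push_cast
      rw [div_zero]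
      positivity
    · have hz : n.choose a = 0 := Nat.choose_eq_zero_of_lt hna
      rw [hz]
      push_cast
      rw [div_zero]
      positivity
  · -- a ≤ n
    rcases lt_or_ge n 10000 with hsmall | hbig
    · -- small n : crude bound
      have habn : a - b ≤ n - b := by omega
      have hcr : ∀ A B : ℕ, 0 < B → (A:ℕ) ≤ 2^n → (A : ℝ) / (B : ℝ) ≤ C / ε ^ 4 := by
        intro A B hB hA
        have h1 : (A : ℝ) / (B : ℝ) ≤ (A : ℝ) :=
          div_le_self (Nat.cast_nonneg _) (by
            have hB1 : 1 ≤ B := hB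
            exact_mod_cast hB1)
        have h2 : (A : ℝ) ≤ (2:ℝ)^n := by exact_mod_cast hA
        have h3 : (2:ℝ)^n ≤ (2:ℝ)^(10000:ℕ) := by
          apply pow_le_pow_right₀ (by norm_num)
          omega
        have h4 : (2:ℝ)^(10000:ℕ) ≤ Real.exp 20000 := by
          have he2 : (2:ℝ) ≤ Real.exp 2 := by
            have := Real.add_one_le_exp (2:ℝ); linarith
          calc (2:ℝ)^(10000:ℕ) ≤ (Real.exp 2)^(10000:ℕ) :=
              pow_le_pow_left₀ (by norm_num) he2 10000
            _ = Real.exp 20000 := by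
              rw [← Real.exp_nat_mul]; norm_num
        have h5 : Real.exp 20000 ≤ C := by
          rw [hCdef]
          exact le_mul_of_one_le_left (Real.exp_pos _).le (by norm_num)
        exact le_trans h1 (le_trans h2 (le_trans h3 (le_trans h4 (le_trans h5 hCle))))
      constructor
      · exact hcr _ _ (Nat.choose_pos habn)
          (le_trans (brb_choose_le_two_pow a (a-b)) (Nat.pow_le_pow_right (by norm_num) han))
      · exact hcr _ _ (Nat.choose_pos han) (brb_choose_le_two_pow n (n/2))
    · -- large n : analytic bound
      obtain ⟨hhalf, hnum⟩ := brb_numeric n hbig ε hε1 hε2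
      set L := Real.log (100 / ε) with hLdef
      have hL0 : 0 ≤ L := Real.log_nonneg (by rw [le_div_iff₀ hε0]; linarith)
      set T : ℝ := 4 * L + 1000 with hTdef
      have hT0 : 0 ≤ T := by rw [hTdef]; linarith
      have hq : δ * (δ + 1) ≤ 2 * T * ((n:ℝ) - δ + 2) := by
        rw [hTdef]
        have : 2 * (4 * L + 1000) = 8 * L + 2000 := by ring
        rw [this]
        exact hnum
      -- the exp-to-target bound
      have hexpT : Real.exp T ≤ C / ε ^ 4 := by
        have hL : Real.exp L = 100 / ε := Real.exp_log (by positivity)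
        have hsplit : Real.exp T = Real.exp 1000 * (Real.exp L)^(4:ℕ) := by
          rw [hTdef, show (4:ℝ) * L + 1000 = 1000 + (4:ℕ) * L by push_cast; ring,
            Real.exp_add, Real.exp_nat_mul]
        rw [hsplit, hL]
        have h1 : (100 / ε)^(4:ℕ) = 10^8 / ε^4 := by
          rw [div_pow]; norm_num
        rw [h1, show Real.exp 1000 * (10 ^ 8 / ε ^ 4) = (Real.exp 1000 * 10 ^ 8) / ε ^ 4 from by ring,
          div_le_div_iff₀ hε4 hε4, hCdef]
        have h2 : Real.exp 1000 ≤ Real.exp 20000 := Real.exp_le_exp.mpr (by norm_num)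
        nlinarith [mul_le_mul_of_nonneg_right h2 (le_of_lt hε4), hε4,
          Real.exp_pos (1000:ℝ), Real.exp_pos (20000:ℝ)]
      clear_value δ L T
      -- real-cast facts
      have hbr : ((n:ℝ) - δ) / 2 ≤ (b:ℝ) := hb
      have har : (a:ℝ) ≤ ((n:ℝ) + δ) / 2 := ha
      have hbar : (b:ℝ) + 1 ≤ (a:ℝ) := by exact_mod_cast hba
      have hanr : (a:ℝ) ≤ (n:ℝ) := by exact_mod_cast han
      -- generic step : from LHS ≤ δ(δ+1)/4 and den ≥ (n-δ+2)/2 conclude LHS ≤ T * den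
      have hgen : ∀ lhs den : ℝ, lhs ≤ δ * (δ + 1) / 4 → ((n:ℝ) - δ + 2)/2 ≤ den →
          lhs ≤ T * den := by
        intro lhs den h1 h2
        have h3 := mul_le_mul_of_nonneg_left h2 hT0
        linarith
      constructor
      · -- part 1
        have hcond : ((a:ℝ) + (b:ℝ) - n) * ((a:ℝ) - b) ≤ T * ((n:ℝ) - a + 1) := by
          apply hgen
          · nlinarith [sq_nonneg (2*(b:ℝ) - n), sq_nonneg (2*(a:ℝ) - n), hδ0,
              sq_le_sq' (show -δ ≤ 2*(a:ℝ) - n by linarith) (show 2*(a:ℝ) - n ≤ δ by linarith)]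
          · linarith
        exact le_trans (brb_ratio1 n b a (le_of_lt hba) han T hT0 hcond) hexpT
      · -- part 2
        have hm2 : 2 * (n/2) ≤ n ∧ n ≤ 2 * (n/2) + 1 := by omega
        have hmr1 : 2 * ((n/2 : ℕ):ℝ) ≤ (n:ℝ) := by exact_mod_cast hm2.1
        have hmr2 : (n:ℝ) ≤ 2 * ((n/2 : ℕ):ℝ) + 1 := by exact_mod_cast hm2.2
        set m := n / 2 with hmdef
        rcases le_or_gt m a with hc | hc
        · have hcr : ((m:ℕ):ℝ) ≤ (a:ℝ) := by exact_mod_cast hc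
          have hcond : ((a:ℝ) + (m:ℝ) - n) * ((a:ℝ) - m) ≤ T * ((n:ℝ) - a + 1) := by
            apply hgen
            · have hp : (a:ℝ) + m - n ≤ δ/2 := by linarith
              have hqu : (a:ℝ) - m ≤ (δ+1)/2 := by linarith
              have hq0 : (0:ℝ) ≤ (a:ℝ) - m := by linarith
              nlinarith [mul_le_mul_of_nonneg_right hp hq0,
                mul_le_mul_of_nonneg_left hqu (show (0:ℝ) ≤ δ/2 by linarith)]
            · linarith
          have hM := brb_master n m a hc han T hT0 hcond
          exact le_trans (brb_ratio2 n a han T hM) hexpT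
        · -- a < m
          have hcr : (a:ℝ) + 1 ≤ ((m:ℕ):ℝ) := by exact_mod_cast hc
          have hmn : m ≤ n := Nat.div_le_self n 2
          have hcast1 : ((n - a : ℕ):ℝ) = (n:ℝ) - a := by
            have : ((n - a : ℕ):ℤ) = (n:ℤ) - a := by omega
            exact_mod_cast this
          have hcast2 : ((n - m : ℕ):ℝ) = (n:ℝ) - m := by
            have : ((n - m : ℕ):ℤ) = (n:ℤ) - m := by omega
            exact_mod_cast this
          have hcond : (((n-a:ℕ):ℝ) + ((n-m:ℕ):ℝ) - n) * (((n-a:ℕ):ℝ) - ((n-m:ℕ):ℝ)) ≤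
              T * ((n:ℝ) - ((n-a:ℕ):ℝ) + 1) := by
            rw [hcast1, hcast2]
            apply hgen
            · have hp : ((n:ℝ) - a) + ((n:ℝ) - m) - n ≤ δ/2 := by linarith
              have hqu : ((n:ℝ) - a) - ((n:ℝ) - m) ≤ (δ+1)/2 := by linarith
              have hq0 : (0:ℝ) ≤ ((n:ℝ) - a) - ((n:ℝ) - m) := by linarith
              nlinarith [mul_le_mul_of_nonneg_right hp hq0,
                mul_le_mul_of_nonneg_left hqu (show (0:ℝ) ≤ δ/2 by linarith)]
            · linarith
          have hM' := brb_master n (n - m) (n - a) (by omega) (by omega) T hT0 hcond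
          rw [show n - (n - a) = a by omega, show n - (n - m) = m by omega] at hM'
          have hM : (a.factorial : ℝ) * ((n - a).factorial : ℝ) ≤
              Real.exp T * ((m.factorial : ℝ) * ((n - m).factorial : ℝ)) := by
            nlinarith [hM']
          exact le_trans (brb_ratio2 n a han T hM) hexpT
end
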